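/- For 1-parameter persistence modules, if M and N are δ-matched (i.e., there is a partial bijection between their indecomposable summands matching δ-interleaved pairs and leaving only 2δ-trivial summands unmatched), then M and N are δ-interleaved. Consequently the interleaving distance is at most the bottleneck distance: d_I(M,N) ≤ d_B(M,N). -/

import Mathlib

open scoped ENNReal NNReal
open Filter
noncomputable section
attribute [local instance] Classical.propDecidable
set_option linter.unusedVariables false

/-- Points of the poset ℝⁿ. The product instance gives the pointwise partial order
and the sup-norm metric. -/
abbrev Pt (n : ℕ) := Fin n → ℝ

/-- The diagonal vector δ⃗ = (δ,...,δ). -/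
def diag (n : ℕ) (δ : ℝ) : Pt n := fun _ => δ

lemma le_add_diag {n : ℕ} (x : Pt n) {δ : ℝ} (hδ : 0 ≤ δ) : x ≤ x + diag n δ :=
  fun _ => le_add_of_nonneg_right hδ

/-- A (p.f.d.-agnostic) persistence module over the poset ℝⁿ with values in
k-vector spaces: a functor from ℝⁿ to Vec. -/
structure PersMod (n : ℕ) (k : Type*) [Field k] where
  V : Pt n → Type*
  [addgrp : ∀ x, AddCommGroup (V x)]
  [mod : ∀ x, Module k (V x)]
  ρ : ∀ {x y : Pt n}, x ≤ y → (V x →ₗ[k] V y)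
  ρ_id : ∀ x : Pt n, ρ (le_refl x) = LinearMap.id
  ρ_comp : ∀ {x y z : Pt n} (h1 : x ≤ y) (h2 : y ≤ z), ρ (h1.trans h2) = (ρ h2).comp (ρ h1)

attribute [instance] PersMod.addgrp PersMod.mod

variable {n : ℕ} {k : Type*} [Field k]

/-- A morphism (natural transformation) of persistence modules. -/
structure PersHom (M N : PersMod n k) where
  app : ∀ x, M.V x →ₗ[k] N.V x
  natural : ∀ {x y : Pt n} (h : x ≤ y), (app y).comp (M.ρ h) = (N.ρ h).comp (app x)

/-- A δ-interleaving between M and N: families φ_x : M_x → N_{x+δ⃗},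
ψ_x : N_x → M_{x+δ⃗} satisfying square and triangular commutativity. -/
def PersMod.Interleaved (M N : PersMod n k) (δ : ℝ≥0) : Prop :=
  ∃ (φ : ∀ x : Pt n, M.V x →ₗ[k] N.V (x + diag n (δ : ℝ)))
    (ψ : ∀ x : Pt n, N.V x →ₗ[k] M.V (x + diag n (δ : ℝ))),
    (∀ {x y : Pt n} (h : x ≤ y),
        (φ y).comp (M.ρ h) = (N.ρ (add_le_add h le_rfl)).comp (φ x)) ∧
    (∀ {x y : Pt n} (h : x ≤ y),
        (ψ y).comp (N.ρ h) = (M.ρ (add_le_add h le_rfl)).comp (ψ x)) ∧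
    (∀ x : Pt n, M.ρ ((le_add_diag x δ.coe_nonneg).trans (le_add_diag _ δ.coe_nonneg))
        = (ψ (x + diag n (δ : ℝ))).comp (φ x)) ∧
    (∀ x : Pt n, N.ρ ((le_add_diag x δ.coe_nonneg).trans (le_add_diag _ δ.coe_nonneg))
        = (φ (x + diag n (δ : ℝ))).comp (ψ x))

/-- The interleaving distance (∞ if no interleaving exists). -/
def PersMod.dI (M N : PersMod n k) : ℝ≥0∞ :=
  ⨅ (δ : ℝ≥0) (_ : M.Interleaved N δ), (δ : ℝ≥0∞)

/-- The diagonal shift M_{→d}. -/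
def PersMod.dshift (M : PersMod n k) (d : ℝ) : PersMod n k where
  V x := M.V (x + diag n d)
  ρ h := M.ρ (add_le_add h le_rfl)
  ρ_id x := M.ρ_id _
  ρ_comp h1 h2 := M.ρ_comp _ _

/-- M is c-trivial: every structure map over a diagonal shift by c is zero. -/
def PersMod.DTrivial (M : PersMod n k) (c : ℝ≥0) : Prop :=
  ∀ x : Pt n, M.ρ (le_add_diag x c.coe_nonneg) = 0

/-- The 1-parameter slice of M along the diagonal line through x. -/
def PersMod.slice (M : PersMod n k) (x : Pt n) : PersMod 1 k where
  V t := M.V (x + diag n (t 0))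
  ρ {t t'} h := M.ρ (fun i => add_le_add (le_refl (x i)) (h 0))
  ρ_id t := M.ρ_id _
  ρ_comp h1 h2 := M.ρ_comp _ _

/-- δ* = sup over diagonal lines of the slice interleaving distances. -/
def deltaStar (M N : PersMod n k) : ℝ≥0∞ :=
  ⨆ x : Pt n, (M.slice x).dI (N.slice x)

/-- Finite direct sum of persistence modules. -/
def dirSum {ι : Type} [Fintype ι] (Ms : ι → PersMod n k) : PersMod n k where
  V x := ∀ i, (Ms i).V x
  ρ h := LinearMap.pi (fun i => ((Ms i).ρ h).comp (LinearMap.proj i))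
  ρ_id x := by
    apply LinearMap.ext; intro v; funext i
    simp [(Ms i).ρ_id]
  ρ_comp h1 h2 := by
    apply LinearMap.ext; intro v; funext i
    show ((Ms i).ρ (h1.trans h2)) (v i) = _
    rw [(Ms i).ρ_comp h1 h2]; rfl

/-- Zigzag reachability inside a set: p ≤ p₁ ≥ p₂ ≤ ... with all points in A. -/
def Zigzag (A : Set (Pt n)) : Pt n → Pt n → Prop :=
  Relation.ReflTransGen (fun a b => a ∈ A ∧ b ∈ A ∧ (a ≤ b ∨ b ≤ a))

/-- An interval: nonempty, order-convex, zigzag-connected. -/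
def IsPInterval (I : Set (Pt n)) : Prop :=
  I.Nonempty ∧ (∀ p ∈ I, ∀ q ∈ I, ∀ r, p ≤ r → r ≤ q → r ∈ I) ∧
    ∀ p ∈ I, ∀ q ∈ I, Zigzag I p q

/-- Q is a (zigzag-)connected component of A. -/
def IsComponent (A Q : Set (Pt n)) : Prop :=
  ∃ p ∈ A, Q = {q | Zigzag A p q}

/-- The fibre of the interval module with interval I: k on I, 0 elsewhere,
realised as a submodule of k. -/
def subOf (k : Type*) [Field k] (I : Set (Pt n)) (x : Pt n) : Submodule k k :=
  if x ∈ I then ⊤ else ⊥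

/-- The canonical map between fibres: identity within I, zero otherwise. -/
def stepFun (I : Set (Pt n)) (x y : Pt n) :
    ↥(subOf k I x) →ₗ[k] ↥(subOf k I y) where
  toFun v := ⟨if y ∈ I then (v : k) else 0, by
    by_cases hy : y ∈ I
    · simp only [subOf, if_pos hy]; exact Submodule.mem_top
    · simp only [subOf, if_neg hy]; exact Submodule.zero_mem _⟩
  map_add' a b := by
    by_cases hy : y ∈ I <;> · apply Subtype.ext; simp [hy]
  map_smul' c a := by
    by_cases hy : y ∈ I <;> · apply Subtype.ext; simp [hy]

/-- The interval module with interval I. -/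
def IntervalMod (k : Type*) [Field k] (I : Set (Pt n)) (hI : IsPInterval I) :
    PersMod n k where
  V x := ↥(subOf k I x)
  ρ {x y} _ := stepFun I x y
  ρ_id x := by
    apply LinearMap.ext; intro v
    apply Subtype.ext
    by_cases hx : x ∈ I
    · simp [stepFun, hx]
    · have hv : (v : k) = 0 := by
        have h2 := v.2
        simp only [subOf, hx, if_false] at h2
        exact (Submodule.mem_bot k).1 h2
      simp [stepFun, hx, hv]
  ρ_comp {x y z} h1 h2 := by
    apply LinearMap.ext; intro v
    apply Subtype.ext
    by_cases hz : z ∈ I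
    · by_cases hy : y ∈ I
      · simp [stepFun, hy, hz]
      · have hx : x ∉ I := fun hx => hy (hI.2.1 x hx z hz y h1 h2)
        have hv : (v : k) = 0 := by
          have h2 := v.2
          simp only [subOf, hx, if_false] at h2
          exact (Submodule.mem_bot k).1 h2
        simp [stepFun, hy, hz, hv]
    · simp [stepFun, hz]

/-- Lower boundary L(I). -/
def lowerBd (I : Set (Pt n)) : Set (Pt n) :=
  {x | x ∈ closure I ∧ ∀ y : Pt n, (∀ i, y i < x i) → y ∉ I}

/-- Upper boundary U(I). -/
def upperBd (I : Set (Pt n)) : Set (Pt n) :=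
  {x | x ∈ closure I ∧ ∀ y : Pt n, (∀ i, x i < y i) → y ∉ I}

/-- Diagonal distance dl(x, A): the infimum of sup-norm distances from x to
points of A along the diagonal line Δ_x, ∞ when Δ_x ∩ A = ∅. -/
def dl (x : Pt n) (A : Set (Pt n)) : ℝ≥0∞ :=
  ⨅ (α : ℝ) (_ : x + diag n α ∈ A), ENNReal.ofReal |α|

/-- d_triv^{(M,N)}(x) = max(dl(x,U(I_M))/2, dl(x,L(I_N))/2). -/
def dtriv (IM IN : Set (Pt n)) (x : Pt n) : ℝ≥0∞ :=
  max (dl x (upperBd IM) / 2) (dl x (lowerBd IN) / 2)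

/-- An intersection component with interval Q is δ_{(M,N)}-trivializable. -/
def Trivializable (IM IN Q : Set (Pt n)) (δ : ℝ≥0∞) : Prop :=
  ∀ x ∈ Q, dtriv IM IN x < δ

/-- (M,N)-validity of an intersection component with interval Q. -/
def MNValid (IM IN Q : Set (Pt n)) : Prop :=
  ∀ x ∈ Q, (∀ y : Pt n, y ≤ x → y ∈ IM → y ∈ IN) ∧
    (∀ z : Pt n, x ≤ z → z ∈ IN → z ∈ IM)

/-- The interval of the shifted module N_{→d}. -/
def shiftSet (I : Set (Pt n)) (d : ℝ) : Set (Pt n) := {x | x + diag n d ∈ I}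

/-- A vertex of (the boundary of) a set: a boundary point through which no
nontrivial line segment of the boundary passes. -/
def IsVertex (I : Set (Pt n)) (x : Pt n) : Prop :=
  x ∈ frontier I ∧
    ¬ ∃ v : Pt n, v ≠ 0 ∧ ∃ ε > (0:ℝ), ∀ t : ℝ, |t| < ε → x + t • v ∈ frontier I

/-- An axis-aligned (possibly degenerate) rectangle. -/
def IsRect (R : Set (Pt n)) : Prop := ∃ a b : Pt n, a ≤ b ∧ R = Set.Icc a b

/-- A discretely presented interval: a finite union of rectangles. -/
def DiscPresented (I : Set (Pt n)) : Prop :=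
  ∃ F : Finset (Set (Pt n)), (∀ R ∈ F, IsRect R) ∧ I = ⋃ R ∈ F, (R : Set (Pt n))

/-- f is a facet of I orthogonal to direction i: contained in a hyperplane
{y_i = c}, contained in the lower or upper boundary, and (n−1)-dimensional
(contains a full hyperplane patch around one of its points). -/
def IsFacetDir (I : Set (Pt n)) (f : Set (Pt n)) (i : Fin n) : Prop :=
  ∃ c : ℝ, f ⊆ {y | y i = c} ∧ (f ⊆ lowerBd I ∨ f ⊆ upperBd I) ∧
    ∃ z ∈ f, ∃ ε > (0:ℝ), ∀ y : Pt n, y i = c → dist y z < ε → y ∈ f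

/-- The set D(x) of the four diagonal boundary distances. -/
def candD (IM IN : Set (Pt n)) (x : Pt n) : Set ℝ≥0∞ :=
  {dl x (lowerBd IM), dl x (lowerBd IN), dl x (upperBd IM), dl x (upperBd IN)}

/-- The candidate set S. -/
def candS (IM IN : Set (Pt n)) : Set ℝ≥0∞ :=
  {d | ∃ x : Pt n, (IsVertex IM x ∨ IsVertex IN x) ∧
    (d ∈ candD IM IN x ∨ 2 * d ∈ candD IM IN x)}

/-- One-sided limit lim_{ε→0+} f(x − ε v) (junk value if the limit fails to exist). -/
def dlim (f : Pt n → ℤ) (x v : Pt n) : ℤ :=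
  limUnder (nhdsWithin (0:ℝ) (Set.Ioi 0)) (fun ε : ℝ => f (x - ε • v))

/-- The indicator vector Σ_{i ∈ s} e_i. -/
def basisVec (n : ℕ) (s : Finset (Fin n)) : Pt n := fun i => if i ∈ s then 1 else 0

/-- The differential Δf(x) = Σ_k (−1)^k Σ_{|s|=k} lim_{ε→0+} f(x − ε Σ_{i∈s} e_i). -/
def diffl (f : Pt n → ℤ) (x : Pt n) : ℤ :=
  ∑ s : Finset (Fin n), (-1 : ℤ) ^ s.card * dlim f x (basisVec n s)

/-- Right continuity of f : ℝⁿ → ℤ. -/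
def RightCont (f : Pt n → ℤ) : Prop :=
  ∀ x : Pt n, Filter.Tendsto f (nhdsWithin x (Set.Ici x)) (nhds (f x))

/-- A nice function: right continuous, finitely supported differential,
support bounded below. -/
def NiceFn (f : Pt n → ℤ) : Prop :=
  RightCont f ∧ {x | diffl f x ≠ 0}.Finite ∧ ∃ a : ℝ, ∀ x, f x ≠ 0 → ∀ i, a ≤ x i

/-- Positive part Δf₊. -/
def difflp (f : Pt n → ℤ) (x : Pt n) : ℤ := max (diffl f x) 0
/-- Negative part Δf₋. -/
def difflm (f : Pt n → ℤ) (x : Pt n) : ℤ := min (diffl f x) 0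

/-- Σ_{y ≤ x} g(y), as a finite sum over the support. -/
def sumLe (g : Pt n → ℤ) (x : Pt n) : ℤ := ∑ᶠ y ∈ {y : Pt n | y ≤ x}, g y

/-- The δ-extension f^{+δ}(x) = f_{Σ+}(x+δ⃗) + f_{Σ−}(x−δ⃗). -/
def extend (f : Pt n → ℤ) (δ : ℝ) (x : Pt n) : ℤ :=
  sumLe (difflp f) (x + diag n δ) + sumLe (difflm f) (x - diag n δ)

/-- The δ-shrinking f^{−δ}(x) = f_{Σ−}(x+δ⃗) + f_{Σ+}(x−δ⃗). -/
def shrink (f : Pt n → ℤ) (δ : ℝ) (x : Pt n) : ℤ :=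
  sumLe (difflm f) (x + diag n δ) + sumLe (difflp f) (x - diag n δ)

/-- d₊(f,g) = inf{δ : f ≤ g^{+δ}, g ≤ f^{+δ}}. -/
def dplus (f g : Pt n → ℤ) : ℝ≥0∞ :=
  ⨅ (δ : ℝ≥0) (_ : (∀ x, f x ≤ extend g δ x) ∧ (∀ x, g x ≤ extend f δ x)), (δ : ℝ≥0∞)

/-- d₋(f,g) = inf{δ : f ≥ g^{−δ}, g ≥ f^{−δ}}. -/
def dminus (f g : Pt n → ℤ) : ℝ≥0∞ :=
  ⨅ (δ : ℝ≥0) (_ : (∀ x, shrink g δ x ≤ f x) ∧ (∀ x, shrink f δ x ≤ g x)), (δ : ℝ≥0∞)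

/-- The dimension distance d₀ = min(d₋, d₊). -/
def d0 (f g : Pt n → ℤ) : ℝ≥0∞ := min (dminus f g) (dplus f g)

/-- The dimension function dm M(x) = dim M_x (as an integer). -/
def dmFun (M : PersMod n k) : Pt n → ℤ := fun x => (Module.finrank k (M.V x) : ℤ)

/-- A nice persistence module: all structure maps over sufficiently small
diagonal shifts are injective or surjective. -/
def PersMod.Nice (M : PersMod n k) : Prop :=
  ∃ ε₀ > (0:ℝ), ∀ ε : ℝ, ∀ h0 : 0 < ε, ε < ε₀ → ∀ x : Pt n,
    Function.Injective (M.ρ (le_add_diag x h0.le)) ∨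
      Function.Surjective (M.ρ (le_add_diag x h0.le))

/-- Composition ρ_i ∘ ... ∘ ρ₁ of a chain of linear maps. -/
def chainComp {K : Type*} [Field K] (V : ℕ → Type*) [∀ i, AddCommGroup (V i)]
    [∀ i, Module K (V i)] (ρ : ∀ i, V i →ₗ[K] V (i+1)) : ∀ i, V 0 →ₗ[K] V i
  | 0 => LinearMap.id
  | (i+1) => (ρ i).comp (chainComp V ρ i)


lemma rho_zero_transport {n : ℕ} {k : Type*} [Field k] (M : PersMod n k)
    {x y y' : Pt n} (e : y = y') (h : x ≤ y) (h' : x ≤ y')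
    (hz : M.ρ h = 0) : M.ρ h' = 0 := by subst e; exact hz

lemma key_match {k : Type*} [Field k] {a b : ℕ}
    (Ms : Fin a → PersMod 1 k) (Ns : Fin b → PersMod 1 k) (δ : ℝ≥0)
    (μ : Fin a → Option (Fin b))
    (hinj : ∀ i i' j, μ i = some j → μ i' = some j → i = i')
    (hMtriv : ∀ i, μ i = none → (Ms i).DTrivial (2 * δ))
    (hNtriv : ∀ j, (∀ i, μ i ≠ some j) → (Ns j).DTrivial (2 * δ))
    (hpair : ∀ i j, μ i = some j → (Ms i).Interleaved (Ns j) δ) :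
    (dirSum Ms).Interleaved (dirSum Ns) δ := by
  classical
  choose φf ψf hφ hψ htr1 htr2 using hpair
  have hdiag : ∀ x : Pt 1, x + diag 1 (δ : ℝ) + diag 1 (δ : ℝ)
      = x + diag 1 (((2 * δ : ℝ≥0) : ℝ)) := by
    intro x; funext i; simp only [Pi.add_apply, diag]; push_cast; ring
  set Φ : ∀ x : Pt 1, (∀ i, (Ms i).V x) →ₗ[k] (∀ j, (Ns j).V (x + diag 1 (δ:ℝ))) :=
    fun x => LinearMap.pi (fun j =>
      if h : ∃ i, μ i = some j then
        (φf h.choose j h.choose_spec x).comp (LinearMap.proj h.choose) else 0) with hΦ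
  set Ψ : ∀ x : Pt 1, (∀ j, (Ns j).V x) →ₗ[k] (∀ i, (Ms i).V (x + diag 1 (δ:ℝ))) :=
    fun x => LinearMap.pi (fun i =>
      if h : ∃ j, μ i = some j then
        (ψf i h.choose h.choose_spec x).comp (LinearMap.proj h.choose) else 0) with hΨ
  have phival : ∀ (x : Pt 1) (v : ∀ i, (Ms i).V x) (i : Fin a) (j : Fin b)
      (hij : μ i = some j), Φ x v j = φf i j hij x (v i) := by
    intro x v i j hij
    have hex : ∃ i', μ i' = some j := ⟨i, hij⟩
    have e : hex.choose = i := hinj _ _ _ hex.choose_spec hij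
    simp only [hΦ, LinearMap.pi_apply, dif_pos hex]
    subst e; rfl
  have phival0 : ∀ (x : Pt 1) (v : ∀ i, (Ms i).V x) (j : Fin b)
      (hj : ∀ i, μ i ≠ some j), Φ x v j = 0 := by
    intro x v j hj
    have hex : ¬ ∃ i', μ i' = some j := by rintro ⟨i, hi⟩; exact hj i hi
    simp only [hΦ, LinearMap.pi_apply, dif_neg hex, LinearMap.zero_apply]
  have psival : ∀ (x : Pt 1) (w : ∀ j, (Ns j).V x) (i : Fin a) (j : Fin b)
      (hij : μ i = some j), Ψ x w i = ψf i j hij x (w j) := by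
    intro x w i j hij
    have hex : ∃ j', μ i = some j' := ⟨j, hij⟩
    have e : hex.choose = j :=
      Option.some.inj (hex.choose_spec.symm.trans hij)
    simp only [hΨ, LinearMap.pi_apply, dif_pos hex]
    subst e; rfl
  have psival0 : ∀ (x : Pt 1) (w : ∀ j, (Ns j).V x) (i : Fin a)
      (hi : μ i = none), Ψ x w i = 0 := by
    intro x w i hi
    have hex : ¬ ∃ j', μ i = some j' := by rintro ⟨j, hj⟩; rw [hi] at hj; exact Option.some_ne_none _ hj.symm
    simp only [hΨ, LinearMap.pi_apply, dif_neg hex, LinearMap.zero_apply]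
  have dsM : ∀ {x y : Pt 1} (h : x ≤ y) (v : ∀ i, (Ms i).V x) (i : Fin a),
      (dirSum Ms).ρ h v i = (Ms i).ρ h (v i) := fun h v i => rfl
  have dsN : ∀ {x y : Pt 1} (h : x ≤ y) (w : ∀ j, (Ns j).V x) (j : Fin b),
      (dirSum Ns).ρ h w j = (Ns j).ρ h (w j) := fun h w j => rfl
  refine ⟨Φ, Ψ, ?_, ?_, ?_, ?_⟩
  · intro x y h
    apply LinearMap.ext; intro v; funext j
    show Φ y ((dirSum Ms).ρ h v) j = (dirSum Ns).ρ _ (Φ x v) j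
    rw [dsN]
    by_cases hj : ∃ i, μ i = some j
    · obtain ⟨i, hij⟩ := hj
      erw [phival y _ i j hij, phival x v i j hij, dsM]
      exact LinearMap.congr_fun (hφ i j hij h) (v i)
    · push_neg at hj
      erw [phival0 y _ j hj, phival0 x v j hj, map_zero]
  · intro x y h
    apply LinearMap.ext; intro w; funext i
    show Ψ y ((dirSum Ns).ρ h w) i = (dirSum Ms).ρ _ (Ψ x w) i
    rw [dsM]
    by_cases hi : ∃ j, μ i = some j
    · obtain ⟨j, hij⟩ := hi
      erw [psival y _ i j hij, psival x w i j hij, dsN]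
      exact LinearMap.congr_fun (hψ i j hij h) (w j)
    · have hnone : μ i = none := by
        cases hμ : μ i with
        | none => rfl
        | some j => exact absurd ⟨j, hμ⟩ hi
      erw [psival0 y _ i hnone, psival0 x w i hnone, map_zero]
  · intro x
    apply LinearMap.ext; intro v; funext i
    show (dirSum Ms).ρ _ v i = Ψ (x + diag 1 (δ:ℝ)) (Φ x v) i
    erw [dsM]
    cases hμ : μ i with
    | some j =>
      rw [psival _ _ i j hμ, phival x v i j hμ]
      exact LinearMap.congr_fun (htr1 i j hμ x) (v i)
    | none =>
      rw [psival0 _ _ i hμ]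
      have hz := rho_zero_transport (Ms i) (hdiag x).symm
        (le_add_diag x (2 * δ).coe_nonneg)
        ((le_add_diag x δ.coe_nonneg).trans (le_add_diag _ δ.coe_nonneg))
        (hMtriv i hμ x)
      rw [hz]; rfl
  · intro x
    apply LinearMap.ext; intro w; funext j
    show (dirSum Ns).ρ _ w j = Φ (x + diag 1 (δ:ℝ)) (Ψ x w) j
    erw [dsN]
    by_cases hj : ∃ i, μ i = some j
    · obtain ⟨i, hij⟩ := hj
      rw [phival _ _ i j hij, psival x w i j hij]
      exact LinearMap.congr_fun (htr2 i j hij x) (w j)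
    · push_neg at hj
      rw [phival0 _ _ j hj]
      have hz := rho_zero_transport (Ns j) (hdiag x).symm
        (le_add_diag x (2 * δ).coe_nonneg)
        ((le_add_diag x δ.coe_nonneg).trans (le_add_diag _ δ.coe_nonneg))
        (hNtriv j hj x)
      rw [hz]; rfl

/-- For 1-parameter persistence modules, a δ-matching between the
indecomposable summands (matched pairs δ-interleaved, unmatched summands
2δ-trivial) yields a δ-interleaving of the direct sums; consequently
d_I ≤ d_B (the infimum over δ admitting a δ-matching). -/
theorem stmt0 {k : Type*} [Field k] {a b : ℕ}
    (Ms : Fin a → PersMod 1 k) (Ns : Fin b → PersMod 1 k) (δ : ℝ≥0)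
    (μ : Fin a → Option (Fin b))
    (hinj : ∀ i i' j, μ i = some j → μ i' = some j → i = i')
    (hMtriv : ∀ i, μ i = none → (Ms i).DTrivial (2 * δ))
    (hNtriv : ∀ j, (∀ i, μ i ≠ some j) → (Ns j).DTrivial (2 * δ))
    (hpair : ∀ i j, μ i = some j → (Ms i).Interleaved (Ns j) δ) :
    (dirSum Ms).Interleaved (dirSum Ns) δ ∧
    (dirSum Ms).dI (dirSum Ns) ≤
      ⨅ (δ' : ℝ≥0) (_ : ∃ μ' : Fin a → Option (Fin b),
          (∀ i i' j, μ' i = some j → μ' i' = some j → i = i') ∧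
          (∀ i, μ' i = none → (Ms i).DTrivial (2 * δ')) ∧
          (∀ j, (∀ i, μ' i ≠ some j) → (Ns j).DTrivial (2 * δ')) ∧
          (∀ i j, μ' i = some j → (Ms i).Interleaved (Ns j) δ')),
        (δ' : ℝ≥0∞) := by
  refine ⟨key_match Ms Ns δ μ hinj hMtriv hNtriv hpair, ?_⟩
  refine le_iInf fun δ' => le_iInf fun hδ' => ?_
  obtain ⟨μ', h1, h2, h3, h4⟩ := hδ'
  exact iInf₂_le δ' (key_match Ms Ns δ' μ' h1 h2 h3 h4)

end
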